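/- Discrete symplectic area and the vertical coordinate of Heisenberg products: let k ≥ 2, let v₁, …, v_k ∈ ℍₙ, and set w_i = v₁·v₂·…·v_i (Heisenberg product) for 1 ≤ i ≤ k. Let γ : [0,1] → ℝ^(2n) be the piecewise-linear curve with γ((i−1)/(k−1)) = π(w_i) for 1 ≤ i ≤ k, affine on each interval [(i−1)/(k−1), i/(k−1)]. Then z(w_k) = S(γ) + ∑_{i=1}^k z(v_i), where S(γ) is the symplectic area of γ (which exists since γ is Lipschitz). -/

import Mathlib

open MeasureTheory Set Filter Topology
open scoped ENNReal

noncomputable section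

/-- Euclidean space `ℝ^(2n)`, the horizontal layer. -/
abbrev E (n : ℕ) : Type := EuclideanSpace ℝ (Fin (2 * n))

/-- The Heisenberg group `ℍₙ` as a set: `ℝ^(2n) × ℝ`. -/
abbrev Hpt (n : ℕ) : Type := E n × ℝ

/-- The standard symplectic form on `ℝ^(2n)` with coordinates `(x₁,y₁,…,xₙ,yₙ)`. -/
def omegaF (n : ℕ) (u v : E n) : ℝ :=
  ∑ i : Fin n,
    (u ⟨2 * i.1, by have := i.isLt; omega⟩ * v ⟨2 * i.1 + 1, by have := i.isLt; omega⟩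
     - v ⟨2 * i.1, by have := i.isLt; omega⟩ * u ⟨2 * i.1 + 1, by have := i.isLt; omega⟩)

/-- The Heisenberg group law. -/
def hmul (n : ℕ) (a b : Hpt n) : Hpt n :=
  (a.1 + b.1, a.2 + b.2 + (1 / 2) * omegaF n a.1 b.1)

/-- The Heisenberg group inverse. -/
def hinv (n : ℕ) (a : Hpt n) : Hpt n := (-a.1, -a.2)

/-- The Korányi norm. -/
def kor (n : ℕ) (q : Hpt n) : ℝ := (‖q.1‖ ^ 4 + 16 * q.2 ^ 2) ^ ((1 : ℝ) / 4)

/-- The Korányi (left-invariant, homogeneous) distance. -/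
def dK (n : ℕ) (p q : Hpt n) : ℝ := kor n (hmul n (hinv n p) q)

/-- The discrete symplectic area `Ŝ(γ_P)` of `γ` along the partition
`t 0 < t 1 < … < t k`:  `½ ∑_i ω(γ(t_i), γ(t_{i+1}))`. -/
def SHat (n : ℕ) (γ : ℝ → E n) (k : ℕ) (t : Fin (k + 1) → ℝ) : ℝ :=
  (1 / 2) * ∑ i : Fin k, omegaF n (γ (t i.castSucc)) (γ (t i.succ))

/-- The symplectic area of `γ : [a,b] → ℝ^(2n)` exists and equals `L`. -/
def IsSympArea (n : ℕ) (a b : ℝ) (γ : ℝ → E n) (L : ℝ) : Prop :=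
  ∀ ε > (0 : ℝ), ∃ δ > (0 : ℝ), ∀ (k : ℕ) (t : Fin (k + 1) → ℝ),
    t 0 = a → t (Fin.last k) = b →
    (∀ i : Fin k, t i.castSucc < t i.succ) →
    (∀ i : Fin k, t i.succ - t i.castSucc < δ) →
    |SHat n γ k t - L| < ε

lemma coord_abs_le_norm {N : ℕ} (u : EuclideanSpace ℝ (Fin N)) (i : Fin N) : |u i| ≤ ‖u‖ := by
  rw [EuclideanSpace.norm_eq]
  have h1 : |u i| = Real.sqrt (|u i| ^ 2) := (Real.sqrt_sq (abs_nonneg _)).symm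
  rw [h1]
  apply Real.sqrt_le_sqrt
  rw [sq_abs]
  refine Finset.single_le_sum (f := fun j => ‖u j‖ ^ 2) (fun j _ => sq_nonneg _) (Finset.mem_univ i) |>.trans_eq' ?_
  simp [Real.norm_eq_abs, sq_abs]

lemma omega_abs_le (n : ℕ) (u v : E n) : |omegaF n u v| ≤ 2 * n * ‖u‖ * ‖v‖ := by
  unfold omegaF
  have key : ∀ (a b : Fin (2*n)), |u a| * |v b| ≤ ‖u‖ * ‖v‖ := fun a b =>
    mul_le_mul (coord_abs_le_norm u a) (coord_abs_le_norm v b) (abs_nonneg _) (norm_nonneg _)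
  calc |∑ i : Fin n, _| ≤ ∑ i : Fin n, |(u ⟨2 * i.1, by omega⟩ * v ⟨2 * i.1 + 1, by omega⟩
     - v ⟨2 * i.1, by omega⟩ * u ⟨2 * i.1 + 1, by omega⟩)| := Finset.abs_sum_le_sum_abs _ _
    _ ≤ ∑ _i : Fin n, (2 * (‖u‖ * ‖v‖)) := by
        refine Finset.sum_le_sum fun i _ => ?_
        refine (abs_sub _ _).trans ?_
        rw [abs_mul, abs_mul]
        have h1 := key ⟨2 * i.1, by omega⟩ ⟨2 * i.1 + 1, by omega⟩
        have h2 : |v ⟨2 * i.1, by omega⟩| * |u ⟨2 * i.1 + 1, by omega⟩| ≤ ‖u‖ * ‖v‖ :=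
          le_trans (le_of_eq (mul_comm _ _)) (key _ _)
        linarith
    _ = 2 * n * ‖u‖ * ‖v‖ := by
        rw [Finset.sum_const, Finset.card_univ, Fintype.card_fin, nsmul_eq_mul]; ring

lemma omega_affine (n : ℕ) (p d : E n) (s t : ℝ) :
    omegaF n (p + s • d) (p + t • d) = (t - s) * omegaF n p d := by
  unfold omegaF
  rw [Finset.mul_sum]
  refine Finset.sum_congr rfl fun i _ => ?_
  simp only [PiLp.add_apply, PiLp.smul_apply, smul_eq_mul]
  ring

lemma omega_self (n : ℕ) (a : E n) : omegaF n a a = 0 := by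
  unfold omegaF
  exact Finset.sum_eq_zero fun i _ => by ring

lemma omega_sub_right (n : ℕ) (a b c : E n) :
    omegaF n a (b - c) = omegaF n a b - omegaF n a c := by
  unfold omegaF
  rw [← Finset.sum_sub_distrib]
  refine Finset.sum_congr rfl fun i _ => ?_
  simp only [PiLp.sub_apply]
  ring

lemma omega_insert (n : ℕ) (a b c : E n) :
    omegaF n a c - omegaF n a b - omegaF n b c = omegaF n (a - b) (c - b) := by
  unfold omegaF
  rw [← Finset.sum_sub_distrib, ← Finset.sum_sub_distrib]
  refine Finset.sum_congr rfl fun i _ => ?_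
  simp only [PiLp.sub_apply]
  ring

lemma fin_telescope : ∀ (m : ℕ) (g : Fin (m + 1) → ℝ),
    ∑ i : Fin m, (g i.succ - g i.castSucc) = g (Fin.last m) - g 0 := by
  intro m
  induction m with
  | zero => intro g; simp
  | succ m ih =>
      intro g
      rw [Fin.sum_univ_castSucc]
      have h := ih (fun i => g i.castSucc)
      simp only [Fin.succ_castSucc] at h ⊢
      rw [show (∑ i : Fin m, (g (i.succ.castSucc) - g (i.castSucc.castSucc)))
            = g (Fin.last m).castSucc - g 0 from h]
      simp [Fin.succ_last]


lemma omega_add_right (n : ℕ) (a b c : E n) :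
    omegaF n a (b + c) = omegaF n a b + omegaF n a c := by
  unfold omegaF
  rw [← Finset.sum_add_distrib]
  refine Finset.sum_congr rfl fun i _ => ?_
  simp only [PiLp.add_apply]
  ring

def Ffun (n k : ℕ) (w : ℕ → Hpt n) (x : ℝ) : ℝ :=
  (1 / 2) * ∑ j ∈ Finset.range (k - 1),
    min (max (x * ((k : ℝ) - 1) - (j : ℝ)) 0) 1 * omegaF n (w j).1 (w (j + 1)).1

set_option maxHeartbeats 1000000 in
/-- **Discrete symplectic area and the vertical coordinate of Heisenberg products**
(Lemma 2.13).  Let `v₁, …, v_k ∈ ℍₙ` (`k ≥ 2`, here indexed `v 0, …, v (k-1)`), let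
`w i = v 0 · v 1 ⋯ v i` be the partial Heisenberg products, and let `γ : [0,1] → ℝ^(2n)`
be the piecewise-linear curve with `γ(i/(k−1)) = π(w i)`, affine on each subinterval.
Then `z(w_{k-1}) = S(γ) + ∑_i z(v i)`, where `S(γ)` is the symplectic area of `γ`. -/
theorem discrete_symp_area_heisenberg (n k : ℕ) (hn : 1 ≤ n) (hk : 2 ≤ k)
    (v w : ℕ → Hpt n)
    (hw0 : w 0 = v 0)
    (hw : ∀ i : ℕ, i + 1 < k → w (i + 1) = hmul n (w i) (v (i + 1)))
    (γ : ℝ → E n)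
    (hnode : ∀ i : ℕ, i < k → γ ((i : ℝ) / ((k : ℝ) - 1)) = (w i).1)
    (haff : ∀ i : ℕ, i + 1 < k →
      ∀ t ∈ Icc ((i : ℝ) / ((k : ℝ) - 1)) (((i : ℝ) + 1) / ((k : ℝ) - 1)),
        γ t = (w i).1 + (t * ((k : ℝ) - 1) - (i : ℝ)) • ((w (i + 1)).1 - (w i).1)) :
    IsSympArea n 0 1 γ ((w (k - 1)).2 - ∑ i ∈ Finset.range k, (v i).2) := by
  intro ε hε
  have hk1 : (1 : ℝ) ≤ (k : ℝ) - 1 := by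
    have : (2 : ℝ) ≤ (k : ℝ) := by exact_mod_cast hk
    linarith
  set K : ℝ := (k : ℝ) - 1 with hKdef
  have hK0 : (0 : ℝ) < K := by linarith
  -- Claim A : exact formula within one affine segment
  have claimA : ∀ j : ℕ, j + 1 < k → ∀ s tt : ℝ, (j : ℝ) / K ≤ s → s ≤ tt →
      tt ≤ ((j : ℝ) + 1) / K →
      (1 / 2) * omegaF n (γ s) (γ tt) = Ffun n k w tt - Ffun n k w s := by
    intro j hj s tt hs hst ht
    have hγs := haff j hj s (Set.mem_Icc.mpr ⟨hs, hst.trans ht⟩)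
    have hγt := haff j hj tt (Set.mem_Icc.mpr ⟨hs.trans hst, ht⟩)
    have hsK : (j : ℝ) ≤ s * K := by rwa [div_le_iff₀ hK0] at hs
    have htK : tt * K ≤ (j : ℝ) + 1 := by rwa [le_div_iff₀ hK0] at ht
    have hstK : s * K ≤ tt * K := by nlinarith
    rw [hγs, hγt, omega_affine]
    have hωd : omegaF n (w j).1 ((w (j + 1)).1 - (w j).1)
        = omegaF n (w j).1 (w (j + 1)).1 := by
      rw [omega_sub_right, omega_self, sub_zero]
    rw [hωd]
    unfold Ffun
    rw [← hKdef, ← mul_sub, ← Finset.sum_sub_distrib]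
    have hsum : ∑ j' ∈ Finset.range (k - 1),
        (min (max (tt * K - (j' : ℝ)) 0) 1 * omegaF n (w j').1 (w (j' + 1)).1
          - min (max (s * K - (j' : ℝ)) 0) 1 * omegaF n (w j').1 (w (j' + 1)).1)
        = (tt * K - (j : ℝ) - (s * K - (j : ℝ))) * omegaF n (w j).1 (w (j + 1)).1 := by
      rw [Finset.sum_eq_single j]
      · have c1 : min (max (tt * K - (j : ℝ)) 0) 1 = tt * K - (j : ℝ) := by
          rw [max_eq_left (by linarith), min_eq_left (by linarith)]
        have c2 : min (max (s * K - (j : ℝ)) 0) 1 = s * K - (j : ℝ) := by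
          rw [max_eq_left (by linarith), min_eq_left (by linarith)]
        rw [c1, c2]; ring
      · intro j' hj' hne
        rcases Nat.lt_or_ge j' j with h | h
        · have hcast : (j' : ℝ) + 1 ≤ (j : ℝ) := by exact_mod_cast Nat.succ_le_of_lt h
          have e1 : min (max (s * K - (j' : ℝ)) 0) 1 = 1 := by
            rw [max_eq_left (by linarith), min_eq_right (by linarith)]
          have e2 : min (max (tt * K - (j' : ℝ)) 0) 1 = 1 := by
            rw [max_eq_left (by linarith), min_eq_right (by linarith)]
          rw [e1, e2]; ring
        · have h' : j < j' := lt_of_le_of_ne h (Ne.symm hne)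
          have hcast : (j : ℝ) + 1 ≤ (j' : ℝ) := by exact_mod_cast Nat.succ_le_of_lt h'
          have e1 : min (max (s * K - (j' : ℝ)) 0) 1 = 0 := by
            rw [max_eq_right (by linarith), min_eq_left (by linarith)]
          have e2 : min (max (tt * K - (j' : ℝ)) 0) 1 = 0 := by
            rw [max_eq_right (by linarith), min_eq_left (by linarith)]
          rw [e1, e2]; ring
      · intro hnotin
        exact absurd (Finset.mem_range.mpr (show j < k - 1 by omega)) hnotin
    rw [hsum]
    try ring
  -- displacement within one segment
  have seg : ∀ j : ℕ, j + 1 < k → ∀ s tt : ℝ, (j : ℝ) / K ≤ s → s ≤ tt →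
      tt ≤ ((j : ℝ) + 1) / K →
      γ tt - γ s = ((tt - s) * K) • ((w (j + 1)).1 - (w j).1) := by
    intro j hj s tt hs hst ht
    rw [haff j hj s (Set.mem_Icc.mpr ⟨hs, hst.trans ht⟩),
        haff j hj tt (Set.mem_Icc.mpr ⟨hs.trans hst, ht⟩),
        add_sub_add_left_eq_sub, ← sub_smul]
    congr 1; ring
  set M : ℝ := K * ∑ j ∈ Finset.range (k - 1), ‖(w (j + 1)).1 - (w j).1‖ with hMdef
  have hM0 : 0 ≤ M :=
    mul_nonneg hK0.le (Finset.sum_nonneg fun _ _ => norm_nonneg _)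
  have segnorm : ∀ j : ℕ, j + 1 < k → ∀ s tt : ℝ, (j : ℝ) / K ≤ s → s ≤ tt →
      tt ≤ ((j : ℝ) + 1) / K → ‖γ tt - γ s‖ ≤ (tt - s) * M := by
    intro j hj s tt hs hst ht
    rw [seg j hj s tt hs hst ht, norm_smul, Real.norm_eq_abs,
        abs_of_nonneg (by nlinarith : (0 : ℝ) ≤ (tt - s) * K)]
    have hsingle : ‖(w (j + 1)).1 - (w j).1‖
        ≤ ∑ j' ∈ Finset.range (k - 1), ‖(w (j' + 1)).1 - (w j').1‖ :=
      Finset.single_le_sum (f := fun j' => ‖(w (j' + 1)).1 - (w j').1‖) (fun _ _ => norm_nonneg _) (Finset.mem_range.mpr (show j < k - 1 by omega))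
    calc (tt - s) * K * ‖(w (j + 1)).1 - (w j).1‖
        ≤ (tt - s) * K * ∑ j' ∈ Finset.range (k - 1), ‖(w (j' + 1)).1 - (w j').1‖ := by
          apply mul_le_mul_of_nonneg_left hsingle (by nlinarith)
      _ = (tt - s) * M := by rw [hMdef]; ring
  -- value of L
  have hL : (w (k - 1)).2 - ∑ i ∈ Finset.range k, (v i).2
      = (1 / 2) * ∑ j ∈ Finset.range (k - 1), omegaF n (w j).1 (w (j + 1)).1 := by
    have main : ∀ m, m + 1 ≤ k →
        (w m).2 = ∑ i ∈ Finset.range (m + 1), (v i).2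
          + (1 / 2) * ∑ j ∈ Finset.range m, omegaF n (w j).1 (w (j + 1)).1 := by
      intro m
      induction m with
      | zero => intro _; simp [hw0]
      | succ m ih =>
          intro hm
          have h1 := hw m (by omega)
          have hwm := ih (by omega)
          have hpm : (w (m + 1)).1 = (w m).1 + (v (m + 1)).1 := by rw [h1]; rfl
          have hzm : (w (m + 1)).2
              = (w m).2 + (v (m + 1)).2 + (1 / 2) * omegaF n (w m).1 (v (m + 1)).1 := by
            rw [h1]; rfl
          have hcm : omegaF n (w m).1 (w (m + 1)).1 = omegaF n (w m).1 (v (m + 1)).1 := by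
            rw [hpm, omega_add_right, omega_self, zero_add]
          rw [hzm, hwm, Finset.sum_range_succ (fun i => (v i).2) (m + 1),
            Finset.sum_range_succ (fun j => omegaF n (w j).1 (w (j + 1)).1) m, hcm]
          ring
    have hmk := main (k - 1) (by omega)
    rw [show k - 1 + 1 = k from by omega] at hmk
    rw [hmk]; ring
  -- F endpoints
  have hF0 : Ffun n k w 0 = 0 := by
    unfold Ffun
    rw [Finset.sum_eq_zero, mul_zero]
    intro j hj
    rw [zero_mul, zero_sub, max_eq_right (neg_nonpos.mpr (Nat.cast_nonneg j)),
      min_eq_left zero_le_one, zero_mul]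
  have hF1 : Ffun n k w 1
      = (1 / 2) * ∑ j ∈ Finset.range (k - 1), omegaF n (w j).1 (w (j + 1)).1 := by
    unfold Ffun
    rw [← hKdef]
    congr 1
    refine Finset.sum_congr rfl fun j hj => ?_
    have hjk2 : j + 2 ≤ k := by
      have := Finset.mem_range.mp hj; omega
    have hjc : (j : ℝ) + 2 ≤ (k : ℝ) := by exact_mod_cast hjk2
    rw [max_eq_left (by rw [hKdef]; linarith), min_eq_right (by rw [hKdef]; linarith), one_mul]
  -- choose δ
  set d : ℝ := min (1 / (2 * K)) (ε / ((n : ℝ) * M ^ 2 + 1)) with hddef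
  have hd0 : 0 < d := lt_min (div_pos one_pos (by linarith)) (div_pos hε (by positivity))
  have hd1 : d ≤ 1 / (2 * K) := min_le_left _ _
  have hd2 : d ≤ ε / ((n : ℝ) * M ^ 2 + 1) := min_le_right _ _
  refine ⟨d, hd0, ?_⟩
  intro k' t ht0 htl hlt hmesh
  have hmono : StrictMono t := Fin.strictMono_iff_lt_succ.mpr hlt
  have hub : ∀ i, t i ≤ 1 := fun i => htl ▸ hmono.monotone (Fin.le_last i)
  have hlb : ∀ i, 0 ≤ t i := fun i => ht0 ▸ hmono.monotone (Fin.zero_le i)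
  -- key per-interval estimate
  have key : ∀ i : Fin k',
      |(1 / 2) * omegaF n (γ (t i.castSucc)) (γ (t i.succ))
        - (Ffun n k w (t i.succ) - Ffun n k w (t i.castSucc))|
      ≤ (n : ℝ) * M ^ 2 * d * (t i.succ - t i.castSucc) := by
    intro i
    set s : ℝ := t i.castSucc with hsdef
    set tt : ℝ := t i.succ with httdef
    have hstt : s < tt := hlt i
    have hs0 : 0 ≤ s := hlb _
    have htt1 : tt ≤ 1 := hub _
    have hmesh' : tt - s < d := hmesh i
    set j : ℕ := min (Nat.floor (s * K)) (k - 2) with hj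
    have hjle : j ≤ k - 2 := by rw [hj]; exact min_le_right _ _
    have hjk : j + 1 < k := by omega
    have hsl : (j : ℝ) / K ≤ s := by
      rw [div_le_iff₀ hK0]
      have h1 : j ≤ Nat.floor (s * K) := by rw [hj]; exact min_le_left _ _
      calc (j : ℝ) ≤ (Nat.floor (s * K) : ℝ) := by exact_mod_cast h1
        _ ≤ s * K := Nat.floor_le (mul_nonneg hs0 hK0.le)
    have hsr : s ≤ ((j : ℝ) + 1) / K := by
      rw [le_div_iff₀ hK0]
      rcases le_or_gt (Nat.floor (s * K)) (k - 2) with h | h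
      · have hjf : j = Nat.floor (s * K) := by rw [hj]; exact min_eq_left h
        rw [hjf]
        exact (Nat.lt_floor_add_one (s * K)).le
      · have hjf : j = k - 2 := by rw [hj]; exact min_eq_right h.le
        have hc : (j : ℝ) = (k : ℝ) - 2 := by
          rw [hjf, Nat.cast_sub hk]; norm_num
        have hs1 : s ≤ 1 := hstt.le.trans htt1
        rw [hc]
        have hKk : (k : ℝ) - 2 + 1 = K := by rw [hKdef]; ring
        rw [hKk]
        nlinarith
    by_cases hcase : tt ≤ ((j : ℝ) + 1) / K
    · rw [claimA j hjk s tt hsl hstt.le hcase, sub_self, abs_zero]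
      exact mul_nonneg (mul_nonneg (by positivity) hd0.le) (by linarith)
    · push_neg at hcase
      have hjk2 : j + 2 < k := by
        by_contra hcon
        have hj2 : j + 2 = k := by omega
        have hjR : (j : ℝ) + 1 = K := by
          have : ((j : ℕ) : ℝ) + 2 = (k : ℝ) := by exact_mod_cast congrArg (Nat.cast : ℕ → ℝ) hj2
          rw [hKdef]; linarith
        rw [hjR, div_self hK0.ne'] at hcase
        linarith
      set u : ℝ := ((j : ℝ) + 1) / K with hu
      have hsu : s ≤ u := hsr
      have hut : u ≤ tt := hcase.le
      have huK : u * K = (j : ℝ) + 1 := by rw [hu]; field_simp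
      have httu : tt ≤ ((j : ℝ) + 1 + 1) / K := by
        rw [le_div_iff₀ hK0]
        have h1 : tt ≤ u + d := by linarith
        have h3 : d * K ≤ 1 / 2 := by
          have h4 : (1 / (2 * K)) * K = 1 / 2 := by field_simp
          calc d * K ≤ (1 / (2 * K)) * K := by nlinarith
            _ = 1 / 2 := h4
        nlinarith
      have hl2 : ((j + 1 : ℕ) : ℝ) / K ≤ u := by push_cast; exact le_of_eq hu.symm
      have htu2 : tt ≤ (((j + 1 : ℕ) : ℝ) + 1) / K := by push_cast; exact httu
      have e1 := claimA j hjk s u hsl hsu (le_of_eq hu)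
      have e2 := claimA (j + 1) hjk2 u tt hl2 hut htu2
      have hFt : Ffun n k w tt - Ffun n k w s
          = (1 / 2) * omegaF n (γ s) (γ u) + (1 / 2) * omegaF n (γ u) (γ tt) := by
        linarith [e1, e2]
      rw [hFt]
      have hins : (1 / 2) * omegaF n (γ s) (γ tt)
          - ((1 / 2) * omegaF n (γ s) (γ u) + (1 / 2) * omegaF n (γ u) (γ tt))
          = (1 / 2) * omegaF n (γ s - γ u) (γ tt - γ u) := by
        rw [← omega_insert]; ring
      rw [hins, abs_mul, show |(1 / 2 : ℝ)| = 1 / 2 by norm_num]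
      have hb := omega_abs_le n (γ s - γ u) (γ tt - γ u)
      have hn1 : ‖γ s - γ u‖ ≤ (u - s) * M := by
        rw [norm_sub_rev]
        exact segnorm j hjk s u hsl hsu (le_of_eq hu)
      have hn2 : ‖γ tt - γ u‖ ≤ (tt - u) * M := segnorm (j + 1) hjk2 u tt hl2 hut htu2
      have husd : u - s ≤ d := by linarith
      have s3 : (u - s) * (tt - u) ≤ d * (tt - s) :=
        mul_le_mul husd (by linarith) (by linarith) hd0.le
      have s1 : ‖γ s - γ u‖ * ‖γ tt - γ u‖ ≤ ((u - s) * M) * ((tt - u) * M) :=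
        mul_le_mul hn1 hn2 (norm_nonneg _) (mul_nonneg (by linarith) hM0)
      have s2 : ((u - s) * M) * ((tt - u) * M) ≤ (d * (tt - s)) * M ^ 2 := by
        calc ((u - s) * M) * ((tt - u) * M) = ((u - s) * (tt - u)) * M ^ 2 := by ring
          _ ≤ (d * (tt - s)) * M ^ 2 := mul_le_mul_of_nonneg_right s3 (sq_nonneg M)
      calc (1 / 2) * |omegaF n (γ s - γ u) (γ tt - γ u)|
          ≤ (1 / 2) * (2 * n * ‖γ s - γ u‖ * ‖γ tt - γ u‖) :=
            mul_le_mul_of_nonneg_left hb (by norm_num)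
        _ = (n : ℝ) * (‖γ s - γ u‖ * ‖γ tt - γ u‖) := by ring
        _ ≤ (n : ℝ) * (((u - s) * M) * ((tt - u) * M)) :=
            mul_le_mul_of_nonneg_left s1 (Nat.cast_nonneg n)
        _ ≤ (n : ℝ) * ((d * (tt - s)) * M ^ 2) :=
            mul_le_mul_of_nonneg_left s2 (Nat.cast_nonneg n)
        _ = (n : ℝ) * M ^ 2 * d * (tt - s) := by ring
  -- assemble
  have hdecomp : SHat n γ k' t - ((w (k - 1)).2 - ∑ i ∈ Finset.range k, (v i).2)
      = ∑ i : Fin k', ((1 / 2) * omegaF n (γ (t i.castSucc)) (γ (t i.succ))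
          - (Ffun n k w (t i.succ) - Ffun n k w (t i.castSucc))) := by
    rw [Finset.sum_sub_distrib,
      show (∑ i : Fin k', (Ffun n k w (t i.succ) - Ffun n k w (t i.castSucc)))
          = Ffun n k w (t (Fin.last k')) - Ffun n k w (t 0) from
        fin_telescope k' (fun i => Ffun n k w (t i)),
      ht0, htl, hF0, hF1, hL]
    unfold SHat
    rw [Finset.mul_sum]
    ring
  rw [show SHat n γ k' t - ((w (k - 1)).2 - ∑ i ∈ Finset.range k, (v i).2)
      = _ from hdecomp]
  calc |∑ i : Fin k', ((1 / 2) * omegaF n (γ (t i.castSucc)) (γ (t i.succ))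
          - (Ffun n k w (t i.succ) - Ffun n k w (t i.castSucc)))|
      ≤ ∑ i : Fin k', |(1 / 2) * omegaF n (γ (t i.castSucc)) (γ (t i.succ))
          - (Ffun n k w (t i.succ) - Ffun n k w (t i.castSucc))| :=
        Finset.abs_sum_le_sum_abs _ _
    _ ≤ ∑ i : Fin k', (n : ℝ) * M ^ 2 * d * (t i.succ - t i.castSucc) :=
        Finset.sum_le_sum fun i _ => key i
    _ = (n : ℝ) * M ^ 2 * d * (1 - 0) := by
        rw [← Finset.mul_sum, fin_telescope k' t, ht0, htl]
    _ < ε := by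
        rw [sub_zero, mul_one]
        have hA : 0 ≤ (n : ℝ) * M ^ 2 := by positivity
        have hle : (n : ℝ) * M ^ 2 * d ≤ (n : ℝ) * M ^ 2 * (ε / ((n : ℝ) * M ^ 2 + 1)) :=
          mul_le_mul_of_nonneg_left hd2 hA
        have hpos : (0 : ℝ) < (n : ℝ) * M ^ 2 + 1 := by positivity
        have h2 : (n : ℝ) * M ^ 2 * (ε / ((n : ℝ) * M ^ 2 + 1)) < ε := by
          rw [mul_div_assoc', div_lt_iff₀ hpos]
          nlinarith
        linarith
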